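/- Let r(X) ∈ Z[X], p prime, i ≥ 1, and set t = q - 2 + q^{-1} and t_p = q^p - 2 + q^{-p} in Z[q,q^{-1}]. Then r(t)^{p^i} - r(t_p)^{p^{i-1}} is divisible by p^i in Z[q,q^{-1}]; equivalently there exists g ∈ Z[X] with r(t)^{p^i} - r(t_p)^{p^{i-1}} = p^i g(t). -/

import Mathlib

open LaurentPolynomial

open Polynomial in
/-- For `r ∈ ℤ[X]`, `p` prime, `i ≥ 1`, with `t = q - 2 + q⁻¹` and
`t_p = q^p - 2 + q^{-p}` in `ℤ[q,q⁻¹]`: there exists `g ∈ ℤ[X]` with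
`r(t)^{p^i} - r(t_p)^{p^{i-1}} = p^i g(t)`. -/
theorem stmt15 (r : Polynomial ℤ) (p : ℕ) (hp : p.Prime) (i : ℕ) (hi : 1 ≤ i) :
    ∃ g : Polynomial ℤ,
      (Polynomial.aeval ((T 1 - 2 + T (-1)) : LaurentPolynomial ℤ) r) ^ (p ^ i)
        - (Polynomial.aeval ((T (p : ℤ) - 2 + T (-(p : ℤ))) : LaurentPolynomial ℤ) r)
            ^ (p ^ (i - 1))
      = (p : LaurentPolynomial ℤ) ^ i
          * Polynomial.aeval ((T 1 - 2 + T (-1)) : LaurentPolynomial ℤ) g := by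
  haveI : Fact p.Prime := ⟨hp⟩
  have hT : (T 1 : LaurentPolynomial ℤ) * T (-1) = 1 := by
    rw [← T_add]; norm_num
  set u : LaurentPolynomial ℤ := T 1 + T (-1) with hu
  set D : Polynomial ℤ := dickson 1 1 p with hD
  have hDu : Polynomial.aeval u D = T (p : ℤ) + T (-(p : ℤ)) := by
    rw [aeval_def, ← eval_map, hD, map_dickson, map_one,
      dickson_one_one_eval_add_inv _ _ hT, T_pow, T_pow]
    norm_num
  set A : Polynomial ℤ := r.comp (X - Polynomial.C 2) with hA
  set B : Polynomial ℤ := r.comp (D - Polynomial.C 2) with hB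
  have ht : (T 1 - 2 + T (-1) : LaurentPolynomial ℤ) = u - 2 := by
    rw [hu]; ring
  have hAu : Polynomial.aeval ((T 1 - 2 + T (-1)) : LaurentPolynomial ℤ) r
      = Polynomial.aeval u A := by
    rw [hA, aeval_comp, map_sub, aeval_X, Polynomial.aeval_C, ht]
    norm_num
  have hBu : Polynomial.aeval ((T (p : ℤ) - 2 + T (-(p : ℤ))) : LaurentPolynomial ℤ) r
      = Polynomial.aeval u B := by
    have h2 : (T (p : ℤ) - 2 + T (-(p : ℤ)) : LaurentPolynomial ℤ)
        = Polynomial.aeval u D - algebraMap ℤ (LaurentPolynomial ℤ) 2 := by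
      rw [hDu]
      simp only [map_ofNat]
      ring
    rw [hB, aeval_comp, map_sub, Polynomial.aeval_C, ← h2]
  -- The key congruence : A ^ p ≡ B  (mod p) in ℤ[X]
  have hmod : (p : Polynomial ℤ) ∣ A ^ p - B := by
    have hmap : ((A ^ p - B).map (Int.castRingHom (ZMod p))) = 0 := by
      have hDp : D.map (Int.castRingHom (ZMod p)) = X ^ p := by
        rw [hD, map_dickson, map_one, dickson_one_one_charP]
      have hAp : (A.map (Int.castRingHom (ZMod p))) ^ p
          = expand (ZMod p) p (A.map (Int.castRingHom (ZMod p))) := by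
        rw [← map_frobenius_expand, ZMod.frobenius_zmod, Polynomial.map_id]
      rw [Polynomial.map_sub, Polynomial.map_pow, hAp, expand_eq_comp_X_pow,
        hA, hB]
      simp only [Polynomial.map_comp, Polynomial.map_sub, Polynomial.map_X,
        Polynomial.map_C, hDp, Polynomial.comp_assoc, Polynomial.sub_comp,
        Polynomial.X_comp, Polynomial.C_comp]
      ring
    rw [← Polynomial.C_eq_natCast, C_dvd_iff_dvd_coeff]
    intro n
    have h := congrArg (fun f => Polynomial.coeff f n) hmap
    simp only [Polynomial.coeff_map, Polynomial.coeff_zero, Int.coe_castRingHom] at h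
    exact (ZMod.intCast_zmod_eq_zero_iff_dvd _ p).mp h
  obtain ⟨c, hc⟩ := dvd_sub_pow_of_dvd_sub hmod (i - 1)
  have hexp : (A ^ p) ^ p ^ (i - 1) = A ^ p ^ i := by
    rw [← pow_mul, ← pow_succ']
    congr 1
    exact congrArg (p ^ ·) (by omega)
  have hik : i - 1 + 1 = i := by omega
  rw [hexp, hik] at hc
  refine ⟨c.comp (X + Polynomial.C 2), ?_⟩
  have hgu : Polynomial.aeval ((T 1 - 2 + T (-1)) : LaurentPolynomial ℤ) (c.comp (X + Polynomial.C 2))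
      = Polynomial.aeval u c := by
    rw [aeval_comp, map_add, aeval_X, Polynomial.aeval_C, ht]
    norm_num
  rw [hAu, hBu, hgu]
  have := congrArg (Polynomial.aeval u) hc
  simpa [map_pow] using this
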